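/- arXiv:1604.01934 — 2 statements merged into one kernel-verified Lean document; each statement's English description precedes it below -/
import Mathlib

section
/- Let G be a fullerene graph with dual G*. If every two faces of G are at distance at most k in G*, then diam(G) ≤ 2k + 3. -/
/-- A (spherical) plane graph, given combinatorially: a connected graph `G`
together with a family of facial closed walks, indexed by `F`, such that each
edge of `G` lies on exactly two faces (counted with multiplicity) and Euler's
formula `V − E + F = 2` holds. -/
structure PlaneGraphWithFaces (V F : Type) [Fintype V] [DecidableEq V]
    [Fintype F] (G : SimpleGraph V) (boundary : F → Σ v : V, G.Walk v v) :
    Prop where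
  conn : G.Connected
  faceCycle : ∀ f : F, (boundary f).2.IsCycle
  edgeTwice : ∀ e ∈ G.edgeSet, (∑ f : F, (boundary f).2.edges.count e) = 2
  euler : (Fintype.card V : ℤ) - Nat.card G.edgeSet + Fintype.card F = 2

/-- The planar dual graph: its vertices are the faces of `G`, two faces being
adjacent when they share an edge. -/
def dualGraph {V F : Type} (G : SimpleGraph V)
    (boundary : F → Σ v : V, G.Walk v v) : SimpleGraph F :=
  SimpleGraph.fromRel fun f g =>
    ∃ e, e ∈ (boundary f).2.edges ∧ e ∈ (boundary g).2.edges

/-- A fullerene graph, presented as a combinatorial plane graph: cubic,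
bridgeless, with all faces pentagons or hexagons. -/
structure IsFullerene (V F : Type) [Fintype V] [DecidableEq V] [Fintype F]
    (G : SimpleGraph V) (boundary : F → Σ v : V, G.Walk v v)
    extends PlaneGraphWithFaces V F G boundary : Prop where
  cubic : ∀ v : V, (G.neighborSet v).ncard = 3
  bridgeless : ∀ e ∈ G.edgeSet, ¬ G.IsBridge e
  faceSize : ∀ f : F, (boundary f).2.length = 5 ∨ (boundary f).2.length = 6

open SimpleGraph

section Aux

variable {V : Type} [DecidableEq V] {G : SimpleGraph V}

/-- Split a walk at an edge. -/
lemma walk_split_at_edge {a b x y : V} (w : G.Walk a b) (he : s(x, y) ∈ w.edges) :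
    (∃ (p : G.Walk a x) (q : G.Walk y b), p.length + q.length + 1 = w.length) ∨
    (∃ (p : G.Walk a y) (q : G.Walk x b), p.length + q.length + 1 = w.length) := by
  induction w with
  | nil => simp at he
  | @cons u c b h p ih =>
    rw [SimpleGraph.Walk.edges_cons, List.mem_cons] at he
    rcases he with he | he
    · rw [Sym2.eq_iff] at he
      rcases he with ⟨rfl, rfl⟩ | ⟨rfl, rfl⟩
      · exact Or.inl ⟨SimpleGraph.Walk.nil, p, by simp⟩
      · exact Or.inr ⟨SimpleGraph.Walk.nil, p, by simp⟩
    · rcases ih he with ⟨p', q', hl⟩ | ⟨p', q', hl⟩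
      · exact Or.inl ⟨SimpleGraph.Walk.cons h p', q', by simp [← hl]; omega⟩
      · exact Or.inr ⟨SimpleGraph.Walk.cons h p', q', by simp [← hl]; omega⟩

/-- Distance between two vertices on a closed walk. -/
lemma two_mul_dist_le_of_mem_closed {a v w : V} (c : G.Walk a a) (hv : v ∈ c.support)
    (hw : w ∈ c.support) : 2 * G.dist v w ≤ c.length := by
  rcases eq_or_ne v w with rfl | hvw
  · simp [SimpleGraph.dist_self]
  have hwt : w ∈ c.support.tail := by
    cases c with
    | nil =>
      exfalso
      simp only [SimpleGraph.Walk.support_nil, List.mem_singleton] at hv hw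
      exact hvw (hv.trans hw.symm)
    | @cons u c b h p =>
      rw [SimpleGraph.Walk.support_cons] at hw ⊢
      rcases List.mem_cons.mp hw with rfl | hw
      · exact (SimpleGraph.Walk.end_mem_support p)
      · exact hw
  set c' := c.rotate _ hv with hc'
  have hw' : w ∈ c'.support := by
    have := (SimpleGraph.Walk.support_rotate c _ hv).perm.mem_iff (a := w)
    have : w ∈ c'.support.tail := this.mpr hwt
    exact List.mem_of_mem_tail this
  have hsplit := congrArg SimpleGraph.Walk.length (c'.take_spec hw')
  rw [SimpleGraph.Walk.length_append] at hsplit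
  have hlen : c'.length = c.length := by
    rw [← SimpleGraph.Walk.length_edges, ← SimpleGraph.Walk.length_edges]
    exact (SimpleGraph.Walk.rotate_edges c _ hv).perm.length_eq
  have h1 : G.dist v w ≤ (c'.takeUntil w hw').length := SimpleGraph.dist_le _
  have h2 : G.dist v w ≤ (c'.dropUntil w hw').length := by
    rw [SimpleGraph.dist_comm]; exact SimpleGraph.dist_le _
  omega

/-- Distance from a vertex on a closed walk to the two ends of an edge of the walk. -/
lemma dist_to_edge_of_closed {a v x y : V} (c : G.Walk a a) (hv : v ∈ c.support)
    (he : s(x, y) ∈ c.edges) : G.dist v x + G.dist v y + 1 ≤ c.length := by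
  set c' := c.rotate _ hv with hc'
  have he' : s(x, y) ∈ c'.edges := (SimpleGraph.Walk.rotate_edges c _ hv).perm.mem_iff.mpr he
  have hlen : c'.length = c.length := by
    rw [← SimpleGraph.Walk.length_edges, ← SimpleGraph.Walk.length_edges]
    exact (SimpleGraph.Walk.rotate_edges c _ hv).perm.length_eq
  rcases walk_split_at_edge c' he' with ⟨p, q, hl⟩ | ⟨p, q, hl⟩
  · have h1 : G.dist v x ≤ p.length := SimpleGraph.dist_le _
    have h2 : G.dist v y ≤ q.length := by rw [SimpleGraph.dist_comm]; exact SimpleGraph.dist_le _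
    omega
  · have h1 : G.dist v y ≤ p.length := SimpleGraph.dist_le _
    have h2 : G.dist v x ≤ q.length := by rw [SimpleGraph.dist_comm]; exact SimpleGraph.dist_le _
    omega

lemma start_mem_head_edges {u b : V} (w : G.Walk u b) (hw : w.edges ≠ []) :
    u ∈ w.edges.head hw := by
  cases w with
  | nil => simp at hw
  | cons h p => simp

lemma head_ne_getLast_of_nodup {α : Type*} {l : List α} (h : l.Nodup) (h2 : 2 ≤ l.length)
    (hne : l ≠ []) : l.head hne ≠ l.getLast hne := by
  cases l with
  | nil => simp at hne
  | cons x t =>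
    have ht : t ≠ [] := by rintro rfl; simp at h2
    rw [List.head_cons, List.getLast_cons ht]
    have hmem : t.getLast ht ∈ t := List.getLast_mem ht
    have hx : x ∉ t := (List.nodup_cons.mp h).1
    rintro rfl; exact hx hmem

/-- A vertex on a cycle is incident to two distinct edges of the cycle. -/
lemma exists_two_edges_of_cycle {a v : V} {c : G.Walk a a} (hc : c.IsCycle)
    (hv : v ∈ c.support) :
    ∃ e₁ e₂, e₁ ∈ c.edges ∧ e₂ ∈ c.edges ∧ e₁ ≠ e₂ ∧ v ∈ e₁ ∧ v ∈ e₂ := by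
  set c' := c.rotate _ hv with hc'def
  have hc' : c'.IsCycle := hc.rotate hv
  have hperm := (SimpleGraph.Walk.rotate_edges c _ hv).perm
  have hlen3 : 3 ≤ c'.length := hc'.three_le_length
  have hlen : c'.edges.length = c'.length := SimpleGraph.Walk.length_edges _
  have hne : c'.edges ≠ [] := by
    intro h0; rw [h0] at hlen; simp at hlen; omega
  refine ⟨c'.edges.head hne, c'.edges.getLast hne, hperm.mem_iff.mp (List.head_mem hne),
    hperm.mem_iff.mp (List.getLast_mem hne), ?_, start_mem_head_edges c' hne, ?_⟩
  · exact head_ne_getLast_of_nodup hc'.edges_nodup (by omega) hne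
  · have hrev : c'.reverse.edges = c'.edges.reverse := SimpleGraph.Walk.edges_reverse c'
    have hne' : c'.reverse.edges ≠ [] := by rw [hrev]; simpa using hne
    have key : ∀ (l₁ l₂ : List (Sym2 V)) (h₁ : l₁ ≠ []) (h₂ : l₂ ≠ []), l₁ = l₂ →
        l₁.head h₁ = l₂.head h₂ := by rintro l₁ _ h₁ h₂ rfl; rfl
    have hmem := start_mem_head_edges c'.reverse hne'
    rw [key _ _ hne' (by simpa using hne) hrev] at hmem
    rwa [List.getLast_eq_head_reverse]

lemma incidence_ncard_eq {v : V} : (G.incidenceSet v).ncard = (G.neighborSet v).ncard := by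
  have himg : G.incidenceSet v = (fun w => s(v, w)) '' G.neighborSet v := by
    ext e
    constructor
    · rintro ⟨he, hve⟩
      induction e with
      | h p q =>
        rw [Sym2.mem_iff] at hve
        rcases hve with rfl | rfl
        · exact ⟨q, (SimpleGraph.mem_edgeSet G).mp he, rfl⟩
        · exact ⟨p, ((SimpleGraph.mem_edgeSet G).mp he).symm, by rw [Sym2.eq_swap]⟩
    · rintro ⟨w, hw, rfl⟩
      exact ⟨(SimpleGraph.mem_edgeSet G).mpr hw, Sym2.mem_mk_left v w⟩
  rw [himg]
  exact Set.ncard_image_of_injective _ (fun p q hpq => by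
    rcases Sym2.eq_iff.mp hpq with ⟨_, h⟩ | ⟨h1, h2⟩
    · exact h
    · rw [← h1, h2])

end Aux


section Main

variable {V F : Type} [Fintype V] [DecidableEq V] [Fintype F]
  {G : SimpleGraph V} {boundary : F → Σ v : V, G.Walk v v}

lemma dual_adj {f g : F} : (dualGraph G boundary).Adj f g ↔ f ≠ g ∧
    ((∃ e, e ∈ (boundary f).2.edges ∧ e ∈ (boundary g).2.edges) ∨
     (∃ e, e ∈ (boundary g).2.edges ∧ e ∈ (boundary f).2.edges)) :=
  SimpleGraph.fromRel_adj _ f g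

lemma edge_face (h : PlaneGraphWithFaces V F G boundary) {e : Sym2 V} (he : e ∈ G.edgeSet) :
    ∃ f, e ∈ (boundary f).2.edges := by
  by_contra hc
  push_neg at hc
  have : (∑ f : F, (boundary f).2.edges.count e) = 0 :=
    Finset.sum_eq_zero fun f _ => List.count_eq_zero.mpr (hc f)
  rw [h.edgeTwice e he] at this
  omega

lemma shared_vertex_adj (h : IsFullerene V F G boundary) {f g : F} (hfg : f ≠ g) {v : V}
    (hvf : v ∈ (boundary f).2.support) (hvg : v ∈ (boundary g).2.support) :
    (dualGraph G boundary).Adj f g := by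
  obtain ⟨e₁, e₂, he₁, he₂, h12, hv1, hv2⟩ := exists_two_edges_of_cycle (h.faceCycle f) hvf
  obtain ⟨e₃, e₄, he₃, he₄, h34, hv3, hv4⟩ := exists_two_edges_of_cycle (h.faceCycle g) hvg
  by_contra hadj
  have hnsh : ∀ e, ¬(e ∈ (boundary f).2.edges ∧ e ∈ (boundary g).2.edges) := by
    intro e he
    exact hadj (dual_adj.mpr ⟨hfg, Or.inl ⟨e, he⟩⟩)
  have d13 : e₁ ≠ e₃ := fun hh => hnsh e₁ ⟨he₁, hh ▸ he₃⟩
  have d14 : e₁ ≠ e₄ := fun hh => hnsh e₁ ⟨he₁, hh ▸ he₄⟩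
  have d23 : e₂ ≠ e₃ := fun hh => hnsh e₂ ⟨he₂, hh ▸ he₃⟩
  have d24 : e₂ ≠ e₄ := fun hh => hnsh e₂ ⟨he₂, hh ▸ he₄⟩
  have hsub : ({e₁, e₂, e₃, e₄} : Set (Sym2 V)) ⊆ G.incidenceSet v := by
    rintro e (rfl | rfl | rfl | rfl)
    · exact ⟨(boundary f).2.edges_subset_edgeSet he₁, hv1⟩
    · exact ⟨(boundary f).2.edges_subset_edgeSet he₂, hv2⟩
    · exact ⟨(boundary g).2.edges_subset_edgeSet he₃, hv3⟩
    · exact ⟨(boundary g).2.edges_subset_edgeSet he₄, hv4⟩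
  have hcard : ({e₁, e₂, e₃, e₄} : Set (Sym2 V)).ncard = 4 := by
    rw [Set.ncard_insert_of_notMem (by simp [h12, d13, d14]),
      Set.ncard_insert_of_notMem (by simp [d23, d24]), Set.ncard_pair h34]
  have h3 : (G.incidenceSet v).ncard = 3 := by rw [incidence_ncard_eq]; exact h.cubic v
  have hle := Set.ncard_le_ncard hsub (Set.toFinite _)
  omega

lemma dual_reachable (h : IsFullerene V F G boundary) (f g : F) :
    (dualGraph G boundary).Reachable f g := by
  have key : ∀ {A B : V} (p : G.Walk A B) (f g : F), A ∈ (boundary f).2.support →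
      B ∈ (boundary g).2.support → (dualGraph G boundary).Reachable f g := by
    intro A B p
    induction p with
    | nil =>
      intro f g hA hB
      rcases eq_or_ne f g with rfl | hfg
      · exact SimpleGraph.Reachable.refl f
      · exact (shared_vertex_adj h hfg hA hB).reachable
    | @cons A C B hadj p ih =>
      intro f g hA hB
      obtain ⟨f', hf'⟩ := edge_face h.toPlaneGraphWithFaces ((G.mem_edgeSet).mpr hadj)
      have hAf' := SimpleGraph.Walk.fst_mem_support_of_mem_edges _ hf'
      have hCf' := SimpleGraph.Walk.snd_mem_support_of_mem_edges _ hf'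
      have r1 : (dualGraph G boundary).Reachable f f' := by
        rcases eq_or_ne f f' with rfl | hff'
        · exact SimpleGraph.Reachable.refl f
        · exact (shared_vertex_adj h hff' hA hAf').reachable
      exact r1.trans (ih f' g hCf' hB)
  obtain ⟨p⟩ := h.conn.preconnected ((boundary f).1) ((boundary g).1)
  exact key p f g ((boundary f).2.start_mem_support) ((boundary g).2.start_mem_support)

lemma walk_bound (h : IsFullerene V F G boundary) {f g : F}
    (w : (dualGraph G boundary).Walk f g) :
    ∀ A : V, A ∈ (boundary f).2.support →
      ∃ B, B ∈ (boundary g).2.support ∧ G.dist A B ≤ 2 * w.length := by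
  induction w with
  | nil => intro A hA; exact ⟨A, hA, by simp [SimpleGraph.dist_self]⟩
  | @cons f f' g hadj w ih =>
    intro A hA
    obtain ⟨-, hor⟩ := dual_adj.mp hadj
    have hsh : ∃ e, e ∈ (boundary f).2.edges ∧ e ∈ (boundary f').2.edges := by
      rcases hor with ⟨e, h1, h2⟩ | ⟨e, h1, h2⟩
      · exact ⟨e, h1, h2⟩
      · exact ⟨e, h2, h1⟩
    obtain ⟨e, hef, hef'⟩ := hsh
    revert hef hef'
    induction e using Sym2.ind with
    | _ x y =>
      intro hef hef'
      have hx : x ∈ (boundary f').2.support :=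
        SimpleGraph.Walk.fst_mem_support_of_mem_edges _ hef'
      have hy : y ∈ (boundary f').2.support :=
        SimpleGraph.Walk.snd_mem_support_of_mem_edges _ hef'
      have hdist := dist_to_edge_of_closed (boundary f).2 hA hef
      have hlen : (boundary f).2.length ≤ 6 := by rcases h.faceSize f with h' | h' <;> omega
      rcases (by omega : G.dist A x ≤ 2 ∨ G.dist A y ≤ 2) with hA2 | hA2
      · obtain ⟨B, hB, hd⟩ := ih x hx
        refine ⟨B, hB, ?_⟩
        have htr := h.conn.dist_triangle (u := A) (v := x) (w := B)
        rw [SimpleGraph.Walk.length_cons]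
        omega
      · obtain ⟨B, hB, hd⟩ := ih y hy
        refine ⟨B, hB, ?_⟩
        have htr := h.conn.dist_triangle (u := A) (v := y) (w := B)
        rw [SimpleGraph.Walk.length_cons]
        omega

theorem stmt_14' (h : IsFullerene V F G boundary) (k : ℕ)
    (hdual : ∀ u v : F, (dualGraph G boundary).dist u v ≤ k) :
    G.diam ≤ 2 * k + 3 := by
  have hconn := h.conn
  have hface : ∀ v : V, ∃ f : F, v ∈ (boundary f).2.support := by
    intro v
    have h3 := h.cubic v
    obtain ⟨u, hu⟩ := Set.nonempty_of_ncard_ne_zero (by rw [h3]; norm_num :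
      (G.neighborSet v).ncard ≠ 0)
    obtain ⟨f, hf⟩ := edge_face h.toPlaneGraphWithFaces ((G.mem_edgeSet).mpr hu)
    exact ⟨f, SimpleGraph.Walk.fst_mem_support_of_mem_edges _ hf⟩
  have key : ∀ u v : V, G.dist u v ≤ 2 * k + 3 := by
    intro u v
    obtain ⟨f, hf⟩ := hface u
    obtain ⟨g, hg⟩ := hface v
    obtain ⟨w, hw⟩ := (dual_reachable h f g).exists_walk_length_eq_dist
    obtain ⟨B, hB, hd⟩ := walk_bound h w u hf
    have hBv : 2 * G.dist B v ≤ (boundary g).2.length :=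
      two_mul_dist_le_of_mem_closed _ hB hg
    have hl6 : (boundary g).2.length ≤ 6 := by rcases h.faceSize g with h' | h' <;> omega
    have htr := hconn.dist_triangle (u := u) (v := B) (w := v)
    have hk := hdual f g
    omega
  have hediam : G.ediam ≤ ((2 * k + 3 : ℕ) : ℕ∞) := by
    apply SimpleGraph.ediam_le_of_edist_le
    intro u v
    obtain ⟨p, hp⟩ := (hconn.preconnected u v).exists_walk_length_eq_dist
    calc G.edist u v ≤ (p.length : ℕ∞) := SimpleGraph.edist_le p
    _ ≤ ((2 * k + 3 : ℕ) : ℕ∞) := by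
        exact_mod_cast Nat.cast_le.mpr (hp ▸ key u v)
  calc G.diam = G.ediam.toNat := rfl
  _ ≤ ((2 * k + 3 : ℕ) : ℕ∞).toNat := ENat.toNat_le_toNat hediam (ENat.coe_ne_top _)
  _ = 2 * k + 3 := ENat.toNat_coe _


/-- If every two faces of a fullerene graph `G` are at distance at most `k`
in the dual graph `G*`, then `diam(G) ≤ 2k + 3`. -/
theorem stmt_14 {V F : Type} [Fintype V] [DecidableEq V] [Fintype F]
    (G : SimpleGraph V) (boundary : F → Σ v : V, G.Walk v v)
    (h : IsFullerene V F G boundary) (k : ℕ)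
    (hdual : ∀ u v : F, (dualGraph G boundary).dist u v ≤ k) :
    G.diam ≤ 2 * k + 3 := by
  exact stmt_14' h k hdual

end Main
end

section
/- In the triangulation D*_{r,t}, every vertex other than the two poles n and s has a neighbour of latitude one greater and a neighbour of latitude one less than its own. Consequently, every vertex of D*_{r,t} lies on some path of length 2r from n to s. -/
/-- The 6-regular triangular lattice: `(x,y)` is adjacent to
`(x±1,y)`, `(x,y±1)`, `(x+1,y+1)` and `(x−1,y−1)`. -/
def triLattice : SimpleGraph (ℤ × ℤ) :=
  SimpleGraph.fromRel fun a b =>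
    (b.1 - a.1, b.2 - a.2) ∈ ({(1, 0), (0, 1), (1, 1)} : Set (ℤ × ℤ))

/-- The ball of radius `r` around the origin of the triangular lattice. -/
def ball (r : ℕ) : Set (ℤ × ℤ) := {v | triLattice.dist (0, 0) v ≤ r}

/-- The sphere of radius `r` around the origin (boundary of the ball). -/
def sphere (r : ℕ) : Set (ℤ × ℤ) := {v | triLattice.dist (0, 0) v = r}

/-- Vertices of one copy of the ball of radius `r`. -/
abbrev BallV (r : ℕ) := {v : ℤ × ℤ // v ∈ ball r}

/-- The gluing relation: the boundary vertex `a` of the first (northern) copy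
of the ball is identified with the boundary vertex `e a` of the second
(southern) copy; `e` encodes the offset-`t` rotation of the boundary cycle. -/
def glueRel (r : ℕ) (e : ℤ × ℤ → ℤ × ℤ) :
    (BallV r ⊕ BallV r) → (BallV r ⊕ BallV r) → Prop := fun x y =>
  ∃ a b : BallV r, (a : ℤ × ℤ) ∈ sphere r ∧ (b : ℤ × ℤ) = e a ∧
    x = Sum.inl a ∧ y = Sum.inr b

/-- The vertex set of `D*_{r,t}`: two disjoint copies of the radius-`r` ball
glued along their boundary via `e`. -/
def GluedV (r : ℕ) (e : ℤ × ℤ → ℤ × ℤ) := Quot (glueRel r e)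

/-- The triangulation `D*_{r,t}`: edges come from the edges of the two copies
of the ball. -/
def Dstar (r : ℕ) (e : ℤ × ℤ → ℤ × ℤ) : SimpleGraph (GluedV r e) :=
  SimpleGraph.fromRel fun x y => ∃ a b : BallV r,
    triLattice.Adj a.1 b.1 ∧
      ((x = Quot.mk _ (Sum.inl a) ∧ y = Quot.mk _ (Sum.inl b)) ∨
       (x = Quot.mk _ (Sum.inr a) ∧ y = Quot.mk _ (Sum.inr b)))

/-- The north pole: the centre of the first copy of the ball. -/
def npole (r : ℕ) (e : ℤ × ℤ → ℤ × ℤ) : GluedV r e :=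
  Quot.mk _ (Sum.inl ⟨(0, 0), by simp [ball, SimpleGraph.dist_self]⟩)

/-- The south pole: the centre of the second copy of the ball. -/
def spole (r : ℕ) (e : ℤ × ℤ → ℤ × ℤ) : GluedV r e :=
  Quot.mk _ (Sum.inr ⟨(0, 0), by simp [ball, SimpleGraph.dist_self]⟩)

/-- `e` preserves adjacency along the boundary cycle (as the rotation by `t`
does). -/
def SphereAdjPreserving (r : ℕ) (e : ℤ × ℤ → ℤ × ℤ) : Prop :=
  ∀ a ∈ sphere r, ∀ b ∈ sphere r, (triLattice.Adj a b ↔ triLattice.Adj (e a) (e b))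

/-- A corner of the ball: a boundary vertex with only 3 neighbours in the
ball. -/
def Corner (r : ℕ) (v : ℤ × ℤ) : Prop :=
  v ∈ sphere r ∧ (triLattice.neighborSet v ∩ ball r).ncard = 3

/-! ### Auxiliary development -/

/-- Hexagonal norm on the triangular lattice. -/
def NN (v : ℤ × ℤ) : ℕ := max (v.1).natAbs (max (v.2).natAbs (v.1 - v.2).natAbs)

lemma NN_eq_zero {v : ℤ × ℤ} (h : NN v = 0) : v = (0, 0) := by
  obtain ⟨x, y⟩ := v; simp only [NN] at h; simp only [Prod.ext_iff]; omega

/-- A step towards the origin. -/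
def dec (v : ℤ × ℤ) : ℤ × ℤ :=
  if 0 < v.1 ∧ 0 < v.2 then (v.1-1, v.2-1)
  else if v.1 < 0 ∧ v.2 < 0 then (v.1+1, v.2+1)
  else if 0 < v.1 then (v.1-1, v.2)
  else if v.1 < 0 then (v.1+1, v.2)
  else if 0 < v.2 then (v.1, v.2-1)
  else (v.1, v.2+1)

/-- A step away from the origin. -/
def inc (v : ℤ × ℤ) : ℤ × ℤ :=
  if 0 ≤ v.1 ∧ 0 ≤ v.2 then (v.1+1, v.2+1)
  else if v.1 ≤ 0 ∧ v.2 ≤ 0 then (v.1-1, v.2-1)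
  else if 0 < v.1 then (v.1+1, v.2)
  else (v.1, v.2+1)

lemma NN_dec {v : ℤ × ℤ} (h : 0 < NN v) : NN (dec v) = NN v - 1 := by
  obtain ⟨x, y⟩ := v
  simp only [NN, dec] at h ⊢
  split_ifs <;> dsimp only at * <;> omega

lemma NN_inc (v : ℤ × ℤ) : NN (inc v) = NN v + 1 := by
  obtain ⟨x, y⟩ := v
  simp only [NN, inc]
  split_ifs <;> dsimp only at * <;> omega

lemma triAdj_of {a b : ℤ × ℤ} (h : (b.1-a.1 = 1 ∧ b.2-a.2 = 0) ∨ (b.1-a.1 = 0 ∧ b.2-a.2 = 1)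
    ∨ (b.1-a.1 = 1 ∧ b.2-a.2 = 1) ∨ (b.1-a.1 = -1 ∧ b.2-a.2 = 0)
    ∨ (b.1-a.1 = 0 ∧ b.2-a.2 = -1) ∨ (b.1-a.1 = -1 ∧ b.2-a.2 = -1)) :
    triLattice.Adj a b := by
  obtain ⟨x, y⟩ := a; obtain ⟨z, w⟩ := b
  simp only [triLattice, SimpleGraph.fromRel_adj, Set.mem_insert_iff, Set.mem_singleton_iff,
    Prod.ext_iff, ne_eq] at *
  constructor
  · rintro ⟨rfl, rfl⟩; omega
  · omega

lemma triAdj_cases {a b : ℤ × ℤ} (h : triLattice.Adj a b) :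
    (b.1-a.1 = 1 ∧ b.2-a.2 = 0) ∨ (b.1-a.1 = 0 ∧ b.2-a.2 = 1)
    ∨ (b.1-a.1 = 1 ∧ b.2-a.2 = 1) ∨ (b.1-a.1 = -1 ∧ b.2-a.2 = 0)
    ∨ (b.1-a.1 = 0 ∧ b.2-a.2 = -1) ∨ (b.1-a.1 = -1 ∧ b.2-a.2 = -1) := by
  obtain ⟨x, y⟩ := a; obtain ⟨z, w⟩ := b
  simp only [triLattice, SimpleGraph.fromRel_adj, Set.mem_insert_iff, Set.mem_singleton_iff,
    Prod.ext_iff, ne_eq] at h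
  omega

lemma dec_adj {v : ℤ × ℤ} : triLattice.Adj v (dec v) := by
  apply triAdj_of
  obtain ⟨x, y⟩ := v
  simp only [dec]
  split_ifs <;> dsimp only <;> omega

lemma inc_adj (v : ℤ × ℤ) : triLattice.Adj v (inc v) := by
  apply triAdj_of
  obtain ⟨x, y⟩ := v
  simp only [inc]
  split_ifs <;> dsimp only <;> omega

lemma NN_lip {a b : ℤ × ℤ} (h : triLattice.Adj a b) : NN b ≤ NN a + 1 ∧ NN a ≤ NN b + 1 := by
  have := triAdj_cases h
  obtain ⟨x, y⟩ := a; obtain ⟨z, w⟩ := b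
  simp only [NN] at *
  omega

lemma walk_to_zero : ∀ (n : ℕ) (v : ℤ × ℤ), NN v = n →
    ∃ p : triLattice.Walk v (0, 0), p.length = n := by
  intro n
  induction n with
  | zero =>
    intro v hv
    have h0 := NN_eq_zero hv
    subst h0
    exact ⟨SimpleGraph.Walk.nil, rfl⟩
  | succ k ih =>
    intro v hv
    obtain ⟨p, hp⟩ := ih (dec v) (by rw [NN_dec] <;> omega)
    exact ⟨SimpleGraph.Walk.cons dec_adj p, by simp [hp]⟩

lemma walk_lb {u v : ℤ × ℤ} (p : triLattice.Walk u v) : NN v ≤ NN u + p.length := by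
  induction p with
  | nil => simp
  | cons h p ih =>
    have := NN_lip h
    simp only [SimpleGraph.Walk.length_cons]
    omega

lemma dist_eq (v : ℤ × ℤ) : triLattice.dist (0, 0) v = NN v := by
  obtain ⟨p, hp⟩ := walk_to_zero (NN v) v rfl
  apply le_antisymm
  · have := SimpleGraph.dist_le p.reverse
    simpa [hp] using this
  · have hre : triLattice.Reachable (0, 0) v := ⟨p.reverse⟩
    obtain ⟨q, hq⟩ := hre.exists_walk_length_eq_dist
    have := walk_lb q
    simp only [NN, Int.natAbs_zero] at this ⊢
    omega

lemma mem_ball {r : ℕ} {v : ℤ × ℤ} : v ∈ ball r ↔ NN v ≤ r := by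
  rw [ball, Set.mem_setOf_eq, dist_eq]

lemma mem_sphere {r : ℕ} {v : ℤ × ℤ} : v ∈ sphere r ↔ NN v = r := by
  rw [sphere, Set.mem_setOf_eq, dist_eq]

section Glued

variable (r : ℕ) (e : ℤ × ℤ → ℤ × ℤ)

/-- Inclusion of the northern ball into the glued vertex set. -/
def qL (a : BallV r) : GluedV r e := Quot.mk _ (Sum.inl a)

/-- Inclusion of the southern ball into the glued vertex set. -/
def qR (b : BallV r) : GluedV r e := Quot.mk _ (Sum.inr b)

variable {r e}

lemma einv_spec (he : Set.BijOn e (sphere r) (sphere r)) {b : ℤ × ℤ} (hb : b ∈ sphere r) :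
    Function.invFunOn e (sphere r) b ∈ sphere r ∧ e (Function.invFunOn e (sphere r) b) = b := by
  obtain ⟨a, ha, hab⟩ := he.surjOn hb
  exact ⟨Function.invFunOn_mem ⟨a, ha, hab⟩, Function.invFunOn_eq ⟨a, ha, hab⟩⟩

open Classical in
/-- A "normal form" map used to prove injectivity of `qL` and `qR`. -/
noncomputable def Phi (he : Set.BijOn e (sphere r) (sphere r)) : GluedV r e → ℤ × ℤ :=
  Quot.lift (fun x => match x with
    | Sum.inl a => a.val
    | Sum.inr b => if b.val ∈ sphere r then Function.invFunOn e (sphere r) b.val else b.val)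
    (by
      rintro x y ⟨a, b, ha, hb, rfl, rfl⟩
      have hea : e a.val ∈ sphere r := he.mapsTo ha
      simp only [hb, if_pos hea]
      exact (he.injOn.leftInvOn_invFunOn ha).symm)

variable (he : Set.BijOn e (sphere r) (sphere r))
include he

lemma qL_inj {a b : BallV r} (h : qL r e a = qL r e b) : a = b :=
  Subtype.ext (congrArg (Phi he) h)

lemma qR_inj {a b : BallV r} (h : qR r e a = qR r e b) : a = b := by
  have h2 := congrArg (Phi he) h
  show _
  apply Subtype.ext
  by_cases ha : a.val ∈ sphere r <;> by_cases hb : b.val ∈ sphere r <;>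
    simp only [Phi, qR, ha, hb, ite_true, ite_false] at h2
  · have h3 := congrArg e h2
    rwa [(einv_spec he ha).2, (einv_spec he hb).2] at h3
  · exact absurd (h2 ▸ (einv_spec he ha).1) hb
  · exact absurd (h2.symm ▸ (einv_spec he hb).1) ha
  · exact h2

lemma adjL {a b : BallV r} (h : triLattice.Adj a.val b.val) :
    (Dstar r e).Adj (qL r e a) (qL r e b) := by
  rw [Dstar, SimpleGraph.fromRel_adj]
  exact ⟨fun hq => h.ne (congrArg Subtype.val (qL_inj he hq)),
    Or.inl ⟨a, b, h, Or.inl ⟨rfl, rfl⟩⟩⟩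

lemma adjR {a b : BallV r} (h : triLattice.Adj a.val b.val) :
    (Dstar r e).Adj (qR r e a) (qR r e b) := by
  rw [Dstar, SimpleGraph.fromRel_adj]
  exact ⟨fun hq => h.ne (congrArg Subtype.val (qR_inj he hq)),
    Or.inl ⟨a, b, h, Or.inr ⟨rfl, rfl⟩⟩⟩

omit he in
lemma glue_eq {a : BallV r} (ha : a.val ∈ sphere r) (b : BallV r) (hb : b.val = e a.val) :
    qL r e a = qR r e b :=
  Quot.sound ⟨a, b, ha, hb, rfl, rfl⟩

omit he in
/-- The latitude (counted from the north pole downwards) of a glued vertex. -/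
def lat (he : Set.BijOn e (sphere r) (sphere r)) : GluedV r e → ℕ :=
  Quot.lift (fun x => match x with
    | Sum.inl a => NN a.val
    | Sum.inr b => 2 * r - NN b.val)
    (by
      rintro x y ⟨a, b, ha, hb, rfl, rfl⟩
      have h1 : NN a.val = r := mem_sphere.mp ha
      have h2 : NN b.val = r := mem_sphere.mp (hb ▸ he.mapsTo ha)
      simp only [h1, h2]
      omega)

lemma lat_inl (a : BallV r) : lat he (Quot.mk (glueRel r e) (Sum.inl a)) = NN a.val := rfl
lemma lat_inr (b : BallV r) :
    lat he (Quot.mk (glueRel r e) (Sum.inr b)) = 2 * r - NN b.val := rfl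
lemma lat_qL (a : BallV r) : lat he (qL r e a) = NN a.val := rfl
lemma lat_qR (b : BallV r) : lat he (qR r e b) = 2 * r - NN b.val := rfl
lemma lat_npole : lat he (npole r e) = 0 := rfl
lemma lat_spole : lat he (spole r e) = 2 * r := by
  show 2 * r - NN (0, 0) = 2 * r
  show 2 * r - 0 = 2 * r
  omega

lemma lat_le (v : GluedV r e) : lat he v ≤ 2 * r := by
  induction v using Quot.ind with
  | mk x =>
    cases x with
    | inl a => have := mem_ball.mp a.2; rw [lat_inl]; omega
    | inr b => rw [lat_inr]; omega

lemma lat_lip {x y : GluedV r e} (h : (Dstar r e).Adj x y) :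
    lat he y ≤ lat he x + 1 ∧ lat he x ≤ lat he y + 1 := by
  rw [Dstar, SimpleGraph.fromRel_adj] at h
  obtain ⟨-, h⟩ := h
  have key : ∀ u w : GluedV r e, (∃ a b : BallV r, triLattice.Adj a.1 b.1 ∧
      ((u = Quot.mk _ (Sum.inl a) ∧ w = Quot.mk _ (Sum.inl b)) ∨
       (u = Quot.mk _ (Sum.inr a) ∧ w = Quot.mk _ (Sum.inr b)))) →
      lat he w ≤ lat he u + 1 ∧ lat he u ≤ lat he w + 1 := by
    rintro u w ⟨a, b, hab, (⟨rfl, rfl⟩ | ⟨rfl, rfl⟩)⟩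
    · have := NN_lip hab
      rw [lat_inl he a, lat_inl he b]
      omega
    · have := NN_lip hab
      have ha := mem_ball.mp a.2
      have hb := mem_ball.mp b.2
      rw [lat_inr he a, lat_inr he b]
      omega
  rcases h with h | h
  · exact key _ _ h
  · exact (key _ _ h).symm

lemma lat_walk_lb {u v : GluedV r e} (p : (Dstar r e).Walk u v) :
    lat he v ≤ lat he u + p.length ∧ lat he u ≤ lat he v + p.length := by
  induction p with
  | nil => simp
  | cons h p ih =>
    have := lat_lip he h
    simp only [SimpleGraph.Walk.length_cons]
    omega

lemma walkL : ∀ (n : ℕ) (a : BallV r), NN a.val = n →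
    ∃ p : (Dstar r e).Walk (qL r e a) (npole r e), p.length = n := by
  intro n
  induction n with
  | zero =>
    intro a ha
    obtain ⟨av, hav⟩ := a
    have h0 : av = (0, 0) := NN_eq_zero ha
    subst h0
    exact ⟨SimpleGraph.Walk.nil, rfl⟩
  | succ k ih =>
    intro a ha
    have hd : NN (dec a.val) = k := by rw [NN_dec (by omega)]; omega
    have hmem : dec a.val ∈ ball r := mem_ball.mpr (by have := mem_ball.mp a.2; omega)
    obtain ⟨p, hp⟩ := ih ⟨dec a.val, hmem⟩ hd
    exact ⟨SimpleGraph.Walk.cons (adjL he dec_adj) p, by simp [hp]⟩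

lemma walkR : ∀ (n : ℕ) (b : BallV r), NN b.val = n →
    ∃ p : (Dstar r e).Walk (qR r e b) (spole r e), p.length = n := by
  intro n
  induction n with
  | zero =>
    intro b hb
    obtain ⟨bv, hbv⟩ := b
    have h0 : bv = (0, 0) := NN_eq_zero hb
    subst h0
    exact ⟨SimpleGraph.Walk.nil, rfl⟩
  | succ k ih =>
    intro b hb
    have hd : NN (dec b.val) = k := by rw [NN_dec (by omega)]; omega
    have hmem : dec b.val ∈ ball r := mem_ball.mpr (by have := mem_ball.mp b.2; omega)
    obtain ⟨p, hp⟩ := ih ⟨dec b.val, hmem⟩ hd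
    exact ⟨SimpleGraph.Walk.cons (adjR he dec_adj) p, by simp [hp]⟩

lemma walkLS : ∀ (k : ℕ) (a : BallV r), NN a.val + k = r →
    ∃ p : (Dstar r e).Walk (qL r e a) (spole r e), p.length = r + k := by
  intro k
  induction k with
  | zero =>
    intro a ha
    have has : a.val ∈ sphere r := mem_sphere.mpr (by omega)
    have hbs : e a.val ∈ sphere r := he.mapsTo has
    have hbr : NN (e a.val) = r := mem_sphere.mp hbs
    obtain ⟨p, hp⟩ := walkR he r ⟨e a.val, mem_ball.mpr (le_of_eq hbr)⟩ hbr
    exact ⟨p.copy (glue_eq has _ rfl).symm rfl, by simp [hp]⟩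
  | succ k ih =>
    intro a ha
    have hmem : inc a.val ∈ ball r := mem_ball.mpr (by rw [NN_inc]; omega)
    obtain ⟨p, hp⟩ := ih ⟨inc a.val, hmem⟩ (by show NN (inc a.val) + k = r; rw [NN_inc]; omega)
    exact ⟨SimpleGraph.Walk.cons (adjL he (inc_adj _)) p, by simp [hp]; omega⟩

lemma walkRN : ∀ (k : ℕ) (b : BallV r), NN b.val + k = r →
    ∃ p : (Dstar r e).Walk (qR r e b) (npole r e), p.length = r + k := by
  intro k
  induction k with
  | zero =>
    intro b hb
    have hbs : b.val ∈ sphere r := mem_sphere.mpr (by omega)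
    obtain ⟨hmem, heq⟩ := einv_spec he hbs
    have har : NN (Function.invFunOn e (sphere r) b.val) = r := mem_sphere.mp hmem
    obtain ⟨p, hp⟩ := walkL he r ⟨_, mem_ball.mpr (le_of_eq har)⟩ har
    exact ⟨p.copy (glue_eq hmem b heq.symm) rfl, by simp [hp]⟩
  | succ k ih =>
    intro b hb
    have hmem : inc b.val ∈ ball r := mem_ball.mpr (by rw [NN_inc]; omega)
    obtain ⟨p, hp⟩ := ih ⟨inc b.val, hmem⟩ (by show NN (inc b.val) + k = r; rw [NN_inc]; omega)
    exact ⟨SimpleGraph.Walk.cons (adjR he (inc_adj _)) p, by simp [hp]; omega⟩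

lemma walk_from_n (v : GluedV r e) :
    ∃ p : (Dstar r e).Walk (npole r e) v, p.length = lat he v := by
  induction v using Quot.ind with
  | mk x =>
    cases x with
    | inl a =>
      obtain ⟨p, hp⟩ := walkL he (NN a.val) a rfl
      exact ⟨p.reverse, by erw [SimpleGraph.Walk.length_reverse, hp, lat_inl he a]⟩
    | inr b =>
      have hb := mem_ball.mp b.2
      obtain ⟨p, hp⟩ := walkRN he (r - NN b.val) b (by omega)
      refine ⟨p.reverse, ?_⟩
      erw [SimpleGraph.Walk.length_reverse, hp, lat_inr he b]
      omega

lemma walk_to_s (v : GluedV r e) :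
    ∃ p : (Dstar r e).Walk v (spole r e), p.length = 2 * r - lat he v := by
  induction v using Quot.ind with
  | mk x =>
    cases x with
    | inl a =>
      have ha := mem_ball.mp a.2
      obtain ⟨p, hp⟩ := walkLS he (r - NN a.val) a (by omega)
      refine ⟨p, ?_⟩
      erw [hp, lat_inl he a]
      omega
    | inr b =>
      have hb := mem_ball.mp b.2
      obtain ⟨p, hp⟩ := walkR he (NN b.val) b rfl
      refine ⟨p, ?_⟩
      erw [hp, lat_inr he b]
      omega

lemma dist_n (v : GluedV r e) : (Dstar r e).dist (npole r e) v = lat he v := by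
  obtain ⟨p, hp⟩ := walk_from_n he v
  refine le_antisymm (hp ▸ SimpleGraph.dist_le p) ?_
  obtain ⟨q, hq⟩ := (SimpleGraph.Walk.reachable p).exists_walk_length_eq_dist
  have h2 := (lat_walk_lb he q).1
  rw [lat_npole he] at h2
  omega

lemma dist_s (v : GluedV r e) : (Dstar r e).dist (spole r e) v = 2 * r - lat he v := by
  obtain ⟨p, hp⟩ := walk_to_s he v
  refine le_antisymm ?_ ?_
  · have := SimpleGraph.dist_le p.reverse
    rwa [SimpleGraph.Walk.length_reverse, hp] at this
  · obtain ⟨q, hq⟩ := (SimpleGraph.Walk.reachable p.reverse).exists_walk_length_eq_dist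
    have h2 := (lat_walk_lb he q).2
    rw [lat_spole he] at h2
    have := lat_le he v
    omega

end Glued

/-- In the triangulation `D*_{r,t}`, every vertex other than the poles `n`
and `s` has a neighbour of latitude one greater (one step closer to `n`) and
a neighbour of latitude one less (one step closer to `s`); consequently,
every vertex lies on some path of length `2r` from `n` to `s`. -/
theorem stmt_15 (r : ℕ) (hr : 2 ≤ r) (e : ℤ × ℤ → ℤ × ℤ)
    (he : Set.BijOn e (sphere r) (sphere r))
    (hadj : SphereAdjPreserving r e)
    (hcor : ∀ v ∈ sphere r, Corner r v → ¬ Corner r (e v)) :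
    (∀ v : GluedV r e, v ≠ npole r e → v ≠ spole r e →
      (∃ w, (Dstar r e).Adj v w ∧
        (Dstar r e).dist (npole r e) w + 1 = (Dstar r e).dist (npole r e) v) ∧
      (∃ w, (Dstar r e).Adj v w ∧
        (Dstar r e).dist (spole r e) w + 1 = (Dstar r e).dist (spole r e) v)) ∧
    (∀ v : GluedV r e, ∃ p : (Dstar r e).Walk (npole r e) (spole r e),
      p.IsPath ∧ p.length = 2 * r ∧ v ∈ p.support) := by
  constructor
  · intro v hn hs
    induction v using Quot.ind with
    | mk x =>
      cases x with
      | inl a =>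
        have hane : NN a.val ≠ 0 := by
          intro h0
          apply hn
          obtain ⟨av, hav⟩ := a
          have : av = (0, 0) := NN_eq_zero h0
          subst this
          rfl
        have haball := mem_ball.mp a.2
        constructor
        · -- towards the north pole
          have hdm : dec a.val ∈ ball r := mem_ball.mpr (by rw [NN_dec (by omega)]; omega)
          refine ⟨qL r e ⟨dec a.val, hdm⟩, adjL he dec_adj, ?_⟩
          erw [dist_n he, dist_n he, lat_qL he, lat_inl he a, NN_dec (by omega)]
          omega
        · -- towards the south pole
          by_cases hsp : NN a.val = r
          · have has : a.val ∈ sphere r := mem_sphere.mpr hsp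
            have hbr : NN (e a.val) = r := mem_sphere.mp (he.mapsTo has)
            have hq : Quot.mk (glueRel r e) (Sum.inl a) =
                qR r e ⟨e a.val, mem_ball.mpr (le_of_eq hbr)⟩ := glue_eq has _ rfl
            have hdm : dec (e a.val) ∈ ball r := mem_ball.mpr (by rw [NN_dec (by omega)]; omega)
            refine ⟨qR r e ⟨dec (e a.val), hdm⟩, ?_, ?_⟩
            · rw [hq]; exact adjR he dec_adj
            · erw [dist_s he, dist_s he, lat_qR he, lat_inl he a, NN_dec (by omega), hbr, hsp]
              omega
          · have hdm : inc a.val ∈ ball r := mem_ball.mpr (by rw [NN_inc]; omega)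
            refine ⟨qL r e ⟨inc a.val, hdm⟩, adjL he (inc_adj _), ?_⟩
            erw [dist_s he, dist_s he, lat_qL he, lat_inl he a, NN_inc]
            omega
      | inr b =>
        have hbne : NN b.val ≠ 0 := by
          intro h0
          apply hs
          obtain ⟨bv, hbv⟩ := b
          have : bv = (0, 0) := NN_eq_zero h0
          subst this
          rfl
        have hbball := mem_ball.mp b.2
        constructor
        · -- towards the north pole
          by_cases hsp : NN b.val = r
          · have hbs : b.val ∈ sphere r := mem_sphere.mpr hsp
            obtain ⟨hmem, heq⟩ := einv_spec he hbs
            have har : NN (Function.invFunOn e (sphere r) b.val) = r := mem_sphere.mp hmem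
            have hq : qL r e ⟨_, mem_ball.mpr (le_of_eq har)⟩ = qR r e b :=
              glue_eq hmem b heq.symm
            have hdm : dec (Function.invFunOn e (sphere r) b.val) ∈ ball r :=
              mem_ball.mpr (by rw [NN_dec (by omega)]; omega)
            refine ⟨qL r e ⟨_, hdm⟩, ?_, ?_⟩
            · have h3 : (Dstar r e).Adj (qL r e ⟨_, mem_ball.mpr (le_of_eq har)⟩)
                  (qL r e ⟨_, hdm⟩) := adjL he dec_adj
              rw [hq] at h3
              exact h3
            · erw [dist_n he, dist_n he, lat_qL he, lat_inr he b, NN_dec (by omega), har, hsp]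
              omega
          · have hdm : inc b.val ∈ ball r := mem_ball.mpr (by rw [NN_inc]; omega)
            refine ⟨qR r e ⟨inc b.val, hdm⟩, adjR he (inc_adj _), ?_⟩
            erw [dist_n he, dist_n he, lat_qR he, lat_inr he b, NN_inc]
            omega
        · -- towards the south pole
          have hdm : dec b.val ∈ ball r := mem_ball.mpr (by rw [NN_dec (by omega)]; omega)
          refine ⟨qR r e ⟨dec b.val, hdm⟩, adjR he dec_adj, ?_⟩
          erw [dist_s he, dist_s he, lat_qR he, lat_inr he b, NN_dec (by omega)]
          omega
  · intro v
    obtain ⟨p1, hp1⟩ := walk_from_n he v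
    obtain ⟨p2, hp2⟩ := walk_to_s he v
    have hlat := lat_le he v
    refine ⟨p1.append p2, ?_, ?_, ?_⟩
    · apply SimpleGraph.Walk.isPath_of_length_eq_dist
      rw [SimpleGraph.Walk.length_append, hp1, hp2, dist_n he, lat_spole he]
      omega
    · rw [SimpleGraph.Walk.length_append, hp1, hp2]
      omega
    · rw [SimpleGraph.Walk.mem_support_append_iff]
      exact Or.inl p1.end_mem_support
end
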